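/- For all integers k with 0 ≤ k ≤ (65-p-t)·2^t, the tail sum ∑_{u=k+1}^{(65-p-t)·2^t} ρ(u) equals (2^t·(1 - t + e(k)) - k)/2^{e(k)}, where e(k) = min(t+1+⌊(k-1)/2^t⌋, 64-p) and ρ(u) = 2^{-e(u)}. -/
import Mathlib


theorem tail_sum_identity (p t : ℕ) (hp : 2 ≤ p) (hpt : p + t ≤ 62)
    (e : ℕ → ℕ)
    (he0 : e 0 = t)
    (he : ∀ u : ℕ, 1 ≤ u → e u = min (t + 1 + (u - 1) / 2 ^ t) (64 - p))
    (k : ℕ) (hk : k ≤ (65 - p - t) * 2 ^ t) :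
    ∑ u ∈ Finset.Icc (k + 1) ((65 - p - t) * 2 ^ t), (1 : ℝ) / 2 ^ (e u)
      = ((2 : ℝ) ^ t * (1 - (t : ℝ) + (e k : ℝ)) - (k : ℝ)) / 2 ^ (e k) := by
  set q : ℕ := 2 ^ t with hq
  have hq1 : 1 ≤ q := Nat.one_le_two_pow
  set M : ℕ := (65 - p - t) * q with hM
  -- e M = 64 - p
  have heM : e M = 64 - p := by
    have hM1 : 1 ≤ M := by
      have : 3 ≤ 65 - p - t := by omega
      calc 1 ≤ 3 * q := by omega
        _ ≤ M := Nat.mul_le_mul_right q this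
    have hdiv : (M - 1) / q = 65 - p - t - 1 := by
      obtain ⟨n, hn⟩ : ∃ n, 65 - p - t = n + 1 := ⟨64 - p - t, by omega⟩
      have hMn : M = n * q + q := by rw [hM, hn, add_mul, one_mul]
      have h1 : M - 1 = n * q + (q - 1) := by omega
      rw [h1, hn]
      rw [Nat.mul_comm n q, Nat.mul_add_div (by omega)]
      simp [Nat.div_eq_of_lt (show q - 1 < q by omega)]
    rw [he M hM1, hdiv]
    have : t + 1 + (65 - p - t - 1) = 65 - p := by omega
    rw [this]
    omega
  -- main downward induction
  have main : ∀ d j, j ≤ M → M - j = d →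
      ∑ u ∈ Finset.Icc (j + 1) M, (1 : ℝ) / 2 ^ (e u)
        = ((2 : ℝ) ^ t * (1 - (t : ℝ) + (e j : ℝ)) - (j : ℝ)) / 2 ^ (e j) := by
    intro d
    induction d with
    | zero =>
      intro j hjM hd
      have hjeq : j = M := by omega
      subst hjeq
      rw [Finset.Icc_eq_empty (by omega), Finset.sum_empty, heM]
      have hMcast : (M : ℝ) = ((65 : ℝ) - p - t) * 2 ^ t := by
        rw [hM, hq]
        rw [show 65 - p - t = 65 - (p + t) from by omega]
        push_cast [Nat.cast_sub (show p + t ≤ 65 by omega)]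
        ring
      have hpc : ((64 - p : ℕ) : ℝ) = 64 - (p : ℝ) :=
        Nat.cast_sub (by omega)
      rw [hpc, hMcast]
      have h2 : ((2 : ℝ) ^ (64 - p) : ℝ) ≠ 0 := by positivity
      field_simp
      ring
    | succ d ih =>
      intro j hjM hd
      have hjM' : j + 1 ≤ M := by omega
      have IH := ih (j + 1) hjM' (by omega)
      -- peel the bottom element
      have hsplit : Finset.Icc (j + 1) M = insert (j + 1) (Finset.Icc (j + 2) M) := by
        have h1 : Finset.Icc (j + 2) M = Finset.Ioc (j + 1) M := Finset.Icc_add_one_left_eq_Ioc (j + 1) M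
        rw [h1, Finset.Ioc_insert_left hjM']
      rw [hsplit, Finset.sum_insert (by simp), IH]
      -- now pure arithmetic: 1/2^(e (j+1)) + RHS(j+1) = RHS(j)
      rcases Nat.eq_zero_or_pos j with hj0 | hj1
      · subst hj0
        have he1 : e 1 = t + 1 := by
          rw [he 1 le_rfl]
          simp only [Nat.sub_self, Nat.zero_div, Nat.add_zero]
          omega
        rw [he1, he0]
        push_cast
        have h1 : ((2 : ℝ) ^ (t + 1)) ≠ 0 := by positivity
        have h2 : ((2 : ℝ) ^ t) ≠ 0 := by positivity
        field_simp
        ring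
      · -- j ≥ 1
        have hej : e j = min (t + 1 + (j - 1) / q) (64 - p) := he j hj1
        have hej1 : e (j + 1) = min (t + 1 + j / q) (64 - p) := by
          rw [he (j + 1) (by omega)]; simp
        have hsd : j / q = (j - 1) / q + if q ∣ j then 1 else 0 := by
          conv_lhs => rw [show j = (j - 1) + 1 from by omega]
          rw [Nat.succ_div, show j - 1 + 1 = j from by omega]
        by_cases hdvd : q ∣ j
        · -- j = q * m, m ≥ 1
          obtain ⟨m, hm⟩ := hdvd
          have hm1 : 1 ≤ m := by
            rcases Nat.eq_zero_or_pos m with h | h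
            · subst h; simp at hm; omega
            · exact h
          obtain ⟨m', hm'⟩ : ∃ m', m = m' + 1 := ⟨m - 1, by omega⟩
          have hjd : (j - 1) / q = m' := by
            have h1 : j - 1 = q * m' + (q - 1) := by
              have : j = q * m' + q := by rw [hm, hm', Nat.mul_add, Nat.mul_one]
              omega
            rw [h1, Nat.mul_add_div (by omega)]
            simp [Nat.div_eq_of_lt (show q - 1 < q by omega)]
          have hjd2 : j / q = m := by
            rw [hm, Nat.mul_div_cancel_left _ (by omega)]
          rw [hjd] at hej
          rw [hjd2] at hej1
          have hejv : e j = min (t + m) (64 - p) := by rw [hej]; congr 1; omega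
          by_cases hlt : t + m < 64 - p
          · have hea : e j = t + m := by rw [hejv]; omega
            have heb : e (j + 1) = t + m + 1 := by rw [hej1]; omega
            rw [hea, heb]
            have hjc : (j : ℝ) = 2 ^ t * (m : ℝ) := by
              rw [hm, hq]; push_cast; ring
            push_cast
            rw [hjc]
            have h1 : ((2 : ℝ) ^ (t + m + 1)) ≠ 0 := by positivity
            have h2 : ((2 : ℝ) ^ (t + m)) ≠ 0 := by positivity
            field_simp
            ring
          · have hea : e j = 64 - p := by rw [hejv]; omega
            have heb : e (j + 1) = 64 - p := by rw [hej1]; omega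
            rw [hea, heb]
            have h1 : ((2 : ℝ) ^ (64 - p)) ≠ 0 := by positivity
            push_cast
            field_simp
            ring
        · have heq : e (j + 1) = e j := by
            rw [hej, hej1, hsd, if_neg hdvd]; simp
          rw [heq]
          have h1 : ((2 : ℝ) ^ (e j)) ≠ 0 := by positivity
          push_cast
          field_simp
          ring
  exact main (M - k) k hk rfl
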